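/- The complex vector space Θ_{n,c}(Γ) of entire functions f with f(z+1)=f(z) and f(z+τ) = (−1)^n e^{−2πi(nz−c)} f(z) has dimension exactly n. -/

import Mathlib

open Complex

/-- The space `Θ_{n,c}(Γ)` of entire functions with `f(z+1) = f(z)` and
`f(z+τ) = (−1)^n e^{−2πi(nz−c)} f(z)`, as a subspace of `ℂ → ℂ`. -/
noncomputable def thetaSpace (τ : ℂ) (n : ℕ) (c : ℂ) : Submodule ℂ (ℂ → ℂ) where
  carrier := {f | Differentiable ℂ f ∧ (∀ z, f (z + 1) = f z) ∧
    ∀ z, f (z + τ) =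
      (-1 : ℂ) ^ n * Complex.exp (-(2 * Real.pi * I) * ((n : ℂ) * z - c)) * f z}
  add_mem' := by
    rintro f g ⟨hf1, hf2, hf3⟩ ⟨hg1, hg2, hg3⟩
    exact ⟨hf1.add hg1, fun z => by simp [hf2 z, hg2 z],
      fun z => by simp [hf3 z, hg3 z]; ring⟩
  zero_mem' := ⟨differentiable_const 0, fun z => rfl, fun z => by simp⟩
  smul_mem' := by
    rintro a f ⟨hf1, hf2, hf3⟩
    exact ⟨hf1.const_smul a, fun z => by simp [hf2 z],
      fun z => by simp [hf3 z]; ring⟩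


open MeasureTheory intervalIntegral Set

noncomputable def coefI (f : ℂ → ℂ) (m : ℤ) : ℂ :=
  ∫ x in (0:ℝ)..1, Complex.exp (-(2 * Real.pi * I) * m * x) * f x

lemma vert_shift (f : ℂ → ℂ) (hf : Differentiable ℂ f) (hper : ∀ z, f (z + 1) = f z) (y : ℝ) :
    (∫ x in (0:ℝ)..1, f (x + y * I)) = ∫ x in (0:ℝ)..1, f x := by
  have H := integral_boundary_rect_eq_zero_of_differentiableOn f 0 (1 + y * I)
    (hf.differentiableOn)
  simp only [Complex.add_re, Complex.one_re, Complex.add_im, Complex.one_im, Complex.zero_re,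
    Complex.zero_im, Complex.mul_re, Complex.mul_im, Complex.I_re, Complex.I_im,
    Complex.ofReal_re, Complex.ofReal_im, mul_zero, mul_one, zero_mul, sub_zero, zero_add,
    add_zero, zero_sub, neg_zero] at H
  have h1 : ∀ t : ℝ, f ((1:ℝ) + t * I) = f ((0:ℝ) + t * I) := by
    intro t
    have := hper (t * I)
    simpa [add_comm] using this
  simp only [h1] at H
  have h2 : (∫ x : ℝ in (0:ℝ)..1, f (x + (0:ℝ) * I)) = ∫ x in (0:ℝ)..1, f x := by
    simp
  rw [h2] at H
  linear_combination -H

lemma full_shift (g : ℂ → ℂ) (hg : Differentiable ℂ g) (hper : ∀ z, g (z + 1) = g z) (τ : ℂ) :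
    (∫ x in (0:ℝ)..1, g (x + τ)) = ∫ x in (0:ℝ)..1, g x := by
  set h : ℝ → ℂ := fun x => g (x + τ.im * I) with hh
  have hph : Function.Periodic h 1 := by
    intro x
    simp only [hh]
    rw [show ((x + 1 : ℝ) : ℂ) + τ.im * I = ((x : ℂ) + τ.im * I) + 1 by push_cast; ring]
    exact hper _
  have e1 : ∀ x : ℝ, g (x + τ) = h (x + τ.re) := by
    intro x
    simp only [hh]
    congr 1
    push_cast
    rw [add_assoc, Complex.re_add_im]
  calc (∫ x in (0:ℝ)..1, g (x + τ)) = ∫ x in (0:ℝ)..1, h (x + τ.re) := by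
        simp only [e1]
    _ = ∫ x in (0:ℝ)+τ.re..(1:ℝ)+τ.re, h x := (intervalIntegral.integral_comp_add_right _ _)
    _ = ∫ x in τ.re..τ.re + 1, h x := by norm_num [add_comm]
    _ = ∫ x in (0:ℝ)..(0:ℝ)+1, h x := hph.intervalIntegral_add_eq τ.re 0
    _ = ∫ x in (0:ℝ)..1, g (x + τ.im * I) := by norm_num [hh]
    _ = ∫ x in (0:ℝ)..1, g x := vert_shift g hg hper τ.im

lemma coef_rec (τ : ℂ) (n : ℕ) (c : ℂ) (f : ℂ → ℂ) (hf : Differentiable ℂ f)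
    (hper : ∀ z, f (z + 1) = f z)
    (hfe : ∀ z, f (z + τ) = (-1 : ℂ) ^ n * Complex.exp (-(2 * Real.pi * I) * ((n : ℂ) * z - c)) * f z)
    (m : ℤ) :
    coefI f m = Complex.exp (-(2 * Real.pi * I) * m * τ) * ((-1 : ℂ) ^ n *
      Complex.exp ((2 * Real.pi * I) * c)) * coefI f (m + n) := by
  set C : ℂ := Complex.exp (-(2 * Real.pi * I) * m * τ) * ((-1 : ℂ) ^ n *
      Complex.exp ((2 * Real.pi * I) * c)) with hC
  set g : ℂ → ℂ := fun z => Complex.exp (-(2 * Real.pi * I) * m * z) * f z with hg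
  have hgd : Differentiable ℂ g := (((differentiable_id.const_mul _)).cexp).mul hf
  have hgper : ∀ z, g (z + 1) = g z := by
    intro z
    simp only [hg]
    rw [hper, mul_add, mul_one, Complex.exp_add,
      show -(2 * (Real.pi:ℂ) * I) * m = (-m : ℤ) * (2 * Real.pi * I) by push_cast; ring,
      Complex.exp_int_mul_two_pi_mul_I, mul_one]
  have key : ∀ x : ℝ, g (x + τ) = C * (Complex.exp (-(2 * Real.pi * I) * (m + n) * x) * f x) := by
    intro x
    simp only [hg, hC]
    rw [hfe]
    rw [show (-(2 * (Real.pi:ℂ) * I) * m * (x + τ)) = (-(2 * Real.pi * I) * m * τ) +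
      (-(2 * Real.pi * I) * m * x) by ring, Complex.exp_add]
    rw [show (-(2 * (Real.pi:ℂ) * I) * ((n : ℂ) * x - c)) = ((2 * Real.pi * I) * c) +
      (-(2 * Real.pi * I) * (n : ℂ) * x) by ring, Complex.exp_add]
    rw [show (-(2 * (Real.pi:ℂ) * I) * ((m : ℂ) + n) * x) = (-(2 * Real.pi * I) * m * x) +
      (-(2 * Real.pi * I) * (n:ℂ) * x) by ring, Complex.exp_add]
    ring
  have := full_shift g hgd hgper τ
  simp only [key] at this
  rw [intervalIntegral.integral_const_mul] at this
  rw [coefI, coefI, ← this]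
  congr 1
  apply intervalIntegral.integral_congr
  intro x hx
  push_cast
  ring_nf

lemma coef_all_zero (τ : ℂ) (n : ℕ) (hn : 0 < n) (c : ℂ) (f : ℂ → ℂ) (hf : Differentiable ℂ f)
    (hper : ∀ z, f (z + 1) = f z)
    (hfe : ∀ z, f (z + τ) = (-1 : ℂ) ^ n * Complex.exp (-(2 * Real.pi * I) * ((n : ℂ) * z - c)) * f z)
    (h0 : ∀ k : ℤ, 0 ≤ k → k < n → coefI f k = 0) (m : ℤ) : coefI f m = 0 := by
  have hCne : ∀ m : ℤ, (Complex.exp (-(2 * Real.pi * I) * m * τ) * ((-1 : ℂ) ^ n *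
      Complex.exp ((2 * Real.pi * I) * c))) ≠ 0 := by
    intro m
    apply mul_ne_zero (Complex.exp_ne_zero _)
    exact mul_ne_zero (pow_ne_zero _ (by norm_num)) (Complex.exp_ne_zero _)
  have main : ∀ q : ℤ, ∀ r : ℤ, 0 ≤ r → r < n → coefI f (r + q * n) = 0 := by
    intro q
    induction q using Int.induction_on with
    | zero => intro r h1 h2; simpa using h0 r h1 h2
    | succ i ih =>
      intro r h1 h2
      have hrec := coef_rec τ n c f hf hper hfe (r + i * n)
      rw [ih r h1 h2] at hrec
      have : coefI f (r + i * n + n) = 0 := by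
        rcases mul_eq_zero.mp hrec.symm with h | h
        · exact absurd h (hCne _)
        · exact h
      convert this using 2
      push_cast
      ring
    | pred i ih =>
      intro r h1 h2
      have hrec := coef_rec τ n c f hf hper hfe (r + (-(i:ℤ) - 1) * n)
      rw [show (r + (-(i:ℤ) - 1) * n + n) = r + (-(i:ℤ)) * n by ring, ih r h1 h2,
        mul_zero] at hrec
      exact hrec
  have h1 : m % n + (m / n) * n = m := by
    rw [mul_comm]
    exact Int.emod_add_mul_ediv m n
  have h2 : 0 ≤ m % n := Int.emod_nonneg m (by exact_mod_cast hn.ne')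
  have h3 : m % n < n := Int.emod_lt_of_pos m (by exact_mod_cast hn)
  have := main (m / n) (m % n) h2 h3
  rwa [h1] at this

lemma zero_on_Ico (f : ℂ → ℂ) (hf : Continuous f) (hper : ∀ z, f (z + 1) = f z)
    (h0 : ∀ m : ℤ, coefI f m = 0) : ∀ x : ℝ, x ∈ Ico (0:ℝ) 1 → f x = 0 := by
  haveI : Fact ((0:ℝ) < 1) := ⟨one_pos⟩
  set F : ℝ → ℂ := fun x => f x with hF
  have hFc : Continuous F := hf.comp Complex.continuous_ofReal
  have hG : Continuous (AddCircle.liftIco (1:ℝ) 0 F) := by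
    apply AddCircle.liftIco_zero_continuous
    · show f ((0:ℝ):ℂ) = f ((1:ℝ):ℂ)
      have := hper 0
      simp only [zero_add] at this
      simp [this.symm]
    · exact hFc.continuousOn
  set G : C(AddCircle (1:ℝ), ℂ) := ⟨AddCircle.liftIco (1:ℝ) 0 F, hG⟩ with hGdef
  have hcoef : ∀ m : ℤ, fourierCoeff (⇑G) m = coefI f m := by
    intro m
    show fourierCoeff (AddCircle.liftIco (1:ℝ) 0 F) m = _
    rw [fourierCoeff_liftIco_eq, fourierCoeffOn_eq_integral, coefI]
    norm_num
    apply intervalIntegral.integral_congr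
    intro x hx
    show (starRingEnd ℂ) (cexp (2 * Real.pi * I * m * x)) * F x =
      cexp (-(2 * Real.pi * I * m * x)) * f x
    rw [← Complex.exp_conj]
    congr 1
    simp only [map_mul, Complex.conj_I, Complex.conj_ofReal, map_intCast, map_ofNat]
    ring
  have hsummable : Summable (fourierCoeff (⇑G)) := by
    have : fourierCoeff (⇑G) = fun _ => (0:ℂ) := by
      funext m; rw [hcoef, h0]
    rw [this]; exact summable_zero
  have hsum := hasSum_fourier_series_of_summable hsummable
  have hzs : ∀ m : ℤ, fourierCoeff (⇑G) m • fourier m = (0 : C(AddCircle (1:ℝ), ℂ)) := by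
    intro m; rw [hcoef, h0, zero_smul]
  simp only [hzs] at hsum
  have hGzero : G = 0 := (hasSum_zero.unique hsum).symm
  intro x hx
  have h1 : AddCircle.liftIco (1:ℝ) 0 F ↑x = F x := AddCircle.liftIco_zero_coe_apply hx
  have h2 : (⇑G : AddCircle (1:ℝ) → ℂ) = 0 := by rw [hGzero]; rfl
  show F x = 0
  rw [← h1]
  exact congrFun h2 _

lemma entire_zero_of_Ico (f : ℂ → ℂ) (hf : Differentiable ℂ f)
    (h : ∀ x : ℝ, x ∈ Ico (0:ℝ) 1 → f x = 0) : f = 0 := by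
  have hA : AnalyticOnNhd ℂ f univ := fun z _ => hf.analyticAt z
  have hfreq : ∃ᶠ z in nhdsWithin (1/2 : ℂ) {(1/2:ℂ)}ᶜ, f z = 0 := by
    set u : ℕ → ℂ := fun k => ((1/2 + 1/(k+4) : ℝ) : ℂ) with hu
    have hne : ∀ k, u k ≠ (1/2 : ℂ) := by
      intro k hcontra
      apply_fun Complex.re at hcontra
      simp only [hu, Complex.ofReal_re, Complex.div_re, Complex.one_re, Complex.one_im] at hcontra
      have hpos : (0:ℝ) < 1/((k:ℝ)+4) := by positivity
      norm_num at hcontra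
      linarith
    have htend0 : Filter.Tendsto (fun k : ℕ => (1/2 + 1/(k+4) : ℝ)) Filter.atTop
        (nhds (1/2 : ℝ)) := by
      have h5 : Filter.Tendsto (fun k : ℕ => 1/((k:ℝ)+4)) Filter.atTop (nhds 0) := by
        simp only [one_div]
        apply Filter.Tendsto.comp tendsto_inv_atTop_zero
        apply Filter.tendsto_atTop_add_const_right
        exact tendsto_natCast_atTop_atTop
      simpa using (tendsto_const_nhds.add h5)
    have htend : Filter.Tendsto u Filter.atTop (nhdsWithin (1/2 : ℂ) {(1/2:ℂ)}ᶜ) := by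
      apply tendsto_nhdsWithin_of_tendsto_nhds_of_eventually_within
      · have h6 : Filter.Tendsto u Filter.atTop (nhds (((1/2:ℝ)) : ℂ)) :=
          (Complex.continuous_ofReal.tendsto _).comp htend0
        rwa [show (((1/2:ℝ)) : ℂ) = (1/2 : ℂ) by norm_num] at h6
      · exact Filter.Eventually.of_forall (fun k => hne k)
    apply htend.frequently
    apply Filter.Frequently.of_forall
    intro k
    apply h
    constructor
    · positivity
    · have h4 : 1/((k:ℝ)+4) ≤ 1/4 := by
        apply one_div_le_one_div_of_le
        · norm_num
        · linarith [Nat.cast_nonneg (α := ℝ) k]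
      linarith
  have := hA.eqOn_zero_of_preconnected_of_frequently_eq_zero isPreconnected_univ
    (mem_univ (1/2 : ℂ)) hfreq
  funext z
  exact this (mem_univ z)

section Theta
variable (τ : ℂ) (n : ℕ) (c : ℂ)

/-- Argument of jacobiTheta₂ used in basis theta functions. -/
noncomputable def Warg (k : ℕ) (z : ℂ) : ℂ :=
  n * z + ((k : ℂ) - n / 2) * τ + ((n : ℂ) / 2 - c)

/-- Basis theta functions. -/
noncomputable def Theta (k : ℕ) : ℂ → ℂ :=
  fun z => Complex.exp ((2 * Real.pi * I) * k * z) * jacobiTheta₂ (Warg τ n c k z) (n * τ)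

lemma im_n_tau (hτ : 0 < τ.im) (hn : 0 < n) : 0 < ((n : ℂ) * τ).im := by
  have : ((n : ℂ) * τ).im = n * τ.im := by
    simp [Complex.mul_im]
  rw [this]
  positivity

lemma jacobiTheta₂_add_nat (w τ' : ℂ) (m : ℕ) :
    jacobiTheta₂ (w + m) τ' = jacobiTheta₂ w τ' := by
  induction m with
  | zero => simp
  | succ i ih =>
    push_cast
    rw [show w + ((i:ℂ)+1) = (w + i) + 1 by ring, jacobiTheta₂_add_left]
    exact_mod_cast ih

lemma Theta_diff (hτ : 0 < τ.im) (hn : 0 < n) (k : ℕ) : Differentiable ℂ (Theta τ n c k) := by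
  apply Differentiable.mul
  · exact (differentiable_id.const_mul _).cexp
  · intro z
    have h1 : DifferentiableAt ℂ (fun w => jacobiTheta₂ w ((n:ℂ) * τ)) (Warg τ n c k z) :=
      differentiableAt_jacobiTheta₂_fst _ (im_n_tau τ n hτ hn)
    have h2 : DifferentiableAt ℂ (Warg τ n c k) z := by
      unfold Warg
      fun_prop
    exact h1.comp z h2

lemma Theta_periodic (k : ℕ) (z : ℂ) : Theta τ n c k (z + 1) = Theta τ n c k z := by
  unfold Theta
  have h1 : Warg τ n c k (z + 1) = Warg τ n c k z + n := by
    unfold Warg; ring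
  rw [h1, jacobiTheta₂_add_nat]
  congr 1
  rw [mul_add, mul_one, Complex.exp_add,
    show (2 * (Real.pi:ℂ) * I) * k = (k:ℤ) * (2 * Real.pi * I) by push_cast; ring,
    Complex.exp_int_mul_two_pi_mul_I, mul_one]

lemma Theta_quasi (k : ℕ) (z : ℂ) : Theta τ n c k (z + τ) =
    (-1 : ℂ) ^ n * Complex.exp (-(2 * Real.pi * I) * ((n : ℂ) * z - c)) * Theta τ n c k z := by
  unfold Theta
  have h1 : Warg τ n c k (z + τ) = Warg τ n c k z + (n : ℂ) * τ := by
    unfold Warg; ring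
  rw [h1, jacobiTheta₂_add_left']
  have hm1 : ((-1 : ℂ)) ^ n = Complex.exp ((n : ℂ) * (Real.pi * I)) := by
    rw [Complex.exp_nat_mul, Complex.exp_pi_mul_I]
  rw [hm1]
  rw [show (2 * (Real.pi:ℂ) * I) * k * (z + τ) = (2 * Real.pi * I) * k * z +
    (2 * Real.pi * I) * k * τ by ring, Complex.exp_add]
  unfold Warg
  rw [← mul_assoc, ← mul_assoc, ← Complex.exp_add, ← Complex.exp_add, ← Complex.exp_add]
  congr 1
  rw [← Complex.exp_add]
  rw [show 2 * (Real.pi:ℂ) * I * k * z + 2 * Real.pi * I * k * τ +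
      -Real.pi * I * ((n:ℂ) * τ + 2 * ((n:ℂ) * z + ((k:ℂ) - (n:ℂ) / 2) * τ + ((n:ℂ) / 2 - c)))
      = ((n:ℂ) * (Real.pi * I) + -(2 * Real.pi * I) * ((n:ℂ) * z - c) +
      2 * Real.pi * I * k * z) + (-((n:ℕ):ℂ)) * (2 * Real.pi * I) by push_cast; ring]
  rw [Complex.exp_add, show (-((n:ℕ):ℂ)) * (2 * Real.pi * I) =
    ((-(n:ℤ) : ℤ) : ℂ) * (2 * Real.pi * I) by push_cast; ring,
    Complex.exp_int_mul_two_pi_mul_I, mul_one]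

end Theta

lemma coefI_Theta (τ : ℂ) (n : ℕ) (c : ℂ) (hτ : 0 < τ.im) (hn : 0 < n) (k : ℕ) (hk : k < n)
    (m : ℤ) (hm0 : 0 ≤ m) (hmn : m < n) :
    coefI (Theta τ n c k) m = if m = k then 1 else 0 := by
  set τ' : ℂ := (n : ℂ) * τ with hτ'def
  have hτ' : 0 < τ'.im := im_n_tau τ n hτ hn
  set Kc : ℂ := ((k : ℂ) - n / 2) * τ + ((n : ℂ) / 2 - c) with hKc
  set D : ℤ → ℂ := fun j => Complex.exp ((2 * Real.pi * I) * j * Kc +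
    Real.pi * I * j ^ 2 * τ') with hD
  set F : ℤ → ℝ → ℂ := fun j x => Complex.exp (-(2 * Real.pi * I) * m * x) *
    (Complex.exp ((2 * Real.pi * I) * k * x) * jacobiTheta₂_term j (Warg τ n c k x) τ') with hF
  -- Step B : closed form of F
  have stepB : ∀ (j : ℤ) (x : ℝ), F j x =
      D j * Complex.exp ((2 * Real.pi * I) * (((k : ℤ) + n * j - m : ℤ) : ℂ) * x) := by
    intro j x
    simp only [hF, hD, jacobiTheta₂_term, Warg, hKc]
    rw [← Complex.exp_add, ← Complex.exp_add, ← Complex.exp_add]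
    congr 1
    push_cast
    ring
  -- Step C : the integral of each term
  have stepC : ∀ j : ℤ, (∫ x in (0:ℝ)..1, F j x) =
      D j * (if ((k : ℤ) + n * j - m) = 0 then 1 else 0) := by
    intro j
    simp only [stepB]
    rw [intervalIntegral.integral_const_mul]
    congr 1
    by_cases h : ((k : ℤ) + n * j - m) = 0
    · rw [h]
      simp
    · rw [if_neg h]
      have hc : (2 * (Real.pi : ℂ) * I) * (((k : ℤ) + n * j - m : ℤ) : ℂ) ≠ 0 := by
        apply mul_ne_zero
        · simp [Real.pi_ne_zero, Complex.I_ne_zero]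
        · exact_mod_cast h
      have := integral_exp_mul_complex (a := (0:ℝ)) (b := 1) hc
      rw [show (fun x : ℝ => Complex.exp ((2 * (Real.pi:ℂ) * I) *
        (((k : ℤ) + n * j - m : ℤ) : ℂ) * x)) = (fun x : ℝ => Complex.exp (((2 * (Real.pi:ℂ) * I) *
        (((k : ℤ) + n * j - m : ℤ) : ℂ)) * x)) from rfl, this]
      rw [show ((2:ℂ) * Real.pi * I * (((k:ℤ) + n*j - m : ℤ):ℂ) * ((1:ℝ):ℂ)) =
        (((k:ℤ) + n*j - m:ℤ):ℂ) * (2*Real.pi*I) by push_cast; ring,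
        Complex.exp_int_mul_two_pi_mul_I]
      norm_num
  -- continuity of the terms
  have hFc : ∀ j : ℤ, Continuous (F j) := by
    intro j
    apply Continuous.mul
    · fun_prop
    apply Continuous.mul
    · fun_prop
    · unfold jacobiTheta₂_term Warg
      fun_prop
  -- Step A : pointwise expansion
  have stepA : ∀ x : ℝ, Complex.exp (-(2 * Real.pi * I) * m * x) * Theta τ n c k x
      = ∑' j : ℤ, F j x := by
    intro x
    simp only [hF, Theta, jacobiTheta₂]
    rw [tsum_mul_left, tsum_mul_left]
  -- summability of integrals of norms
  set r : ℤ → ℝ := fun j =>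
    Real.exp (-Real.pi * (τ'.im * (j:ℝ) ^ 2 - 2 * |Kc.im| * |(j:ℝ)|)) with hr
  have hrsum : Summable r := by
    have h := summable_pow_mul_jacobiTheta₂_term_bound |Kc.im| hτ' 0
    simp only [pow_zero, one_mul] at h
    refine h.congr fun j => ?_
    simp only [hr]
    congr 1
    push_cast
    ring
  have him : ∀ x : ℝ, (Warg τ n c k x).im = Kc.im := by
    intro x
    simp [Warg, hKc, Complex.add_im, Complex.mul_im]
  have hnorm : ∀ (j : ℤ) (x : ℝ), ‖F j x‖ ≤ r j := by
    intro j x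
    have h1 : ‖F j x‖ = ‖jacobiTheta₂_term j (Warg τ n c k x) τ'‖ := by
      simp only [hF, norm_mul, Complex.norm_exp]
      have e1 : (-(2 * (Real.pi:ℂ) * I) * m * x).re = 0 := by
        simp [Complex.mul_re, Complex.mul_im]
      have e2 : ((2 * (Real.pi:ℂ) * I) * k * x).re = 0 := by
        simp [Complex.mul_re, Complex.mul_im]
      rw [e1, e2]
      simp
    rw [h1]
    have := norm_jacobiTheta₂_term_le hτ' (z := Warg τ n c k x) (τ := τ')
      (S := |Kc.im|) (by rw [him x]) le_rfl j
    simpa [hr] using this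
  have hInt : ∀ j : ℤ, IntegrableOn (F j) (Ioc (0:ℝ) 1) volume := by
    intro j
    exact (hFc j).integrableOn_Ioc
  have hIntNorm : Summable (fun j : ℤ => ∫ x in Ioc (0:ℝ) 1, ‖F j x‖) := by
    apply Summable.of_nonneg_of_le (fun j => integral_nonneg (fun x => norm_nonneg _))
      (fun j => ?_) hrsum
    calc (∫ x in Ioc (0:ℝ) 1, ‖F j x‖) ≤ ∫ _x in Ioc (0:ℝ) 1, r j := by
          apply setIntegral_mono_on (hInt j).norm (integrableOn_const ?_)
            measurableSet_Ioc (fun x _ => hnorm j x)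
          rw [Real.volume_Ioc]
          norm_num
      _ = r j := by
          rw [setIntegral_const, Real.volume_real_Ioc, smul_eq_mul]
          norm_num
  -- Step D : swap sum and integral
  have stepD : coefI (Theta τ n c k) m = ∑' j : ℤ, ∫ x in (0:ℝ)..1, F j x := by
    rw [coefI]
    rw [intervalIntegral.integral_congr (g := fun x : ℝ => ∑' j : ℤ, F j x)
      (fun x _ => stepA x)]
    rw [intervalIntegral.integral_of_le zero_le_one]
    rw [← integral_tsum_of_summable_integral_norm hInt hIntNorm]
    exact tsum_congr fun j => (intervalIntegral.integral_of_le zero_le_one).symm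
  rw [stepD]
  simp only [stepC]
  by_cases hcase : m = (k : ℤ)
  · rw [if_pos (by exact_mod_cast hcase)]
    rw [tsum_eq_single 0 ?_]
    · rw [hcase]
      norm_num [hD]
    · intro j hj
      rw [if_neg, mul_zero]
      rw [hcase]
      intro hcontra
      apply hj
      have : (n:ℤ) * j = 0 := by omega
      rcases mul_eq_zero.mp this with h | h
      · exact absurd h (by exact_mod_cast hn.ne')
      · exact h
  · rw [if_neg (by exact_mod_cast hcase)]
    have hzero : ∀ j : ℤ, D j * (if ((k : ℤ) + n * j - m) = 0 then (1:ℂ) else 0) = 0 := by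
      intro j
      rw [if_neg, mul_zero]
      intro hcontra
      have hj0 : j = 0 := by
        rcases lt_trichotomy j 0 with h | h | h
        · exfalso
          have h1 : j ≤ -1 := by omega
          have h2 : (n:ℤ) * j ≤ (n:ℤ) * (-1) :=
            mul_le_mul_of_nonneg_left h1 (by positivity)
          omega
        · exact h
        · exfalso
          have h1 : 1 ≤ j := by omega
          have h2 : (n:ℤ) * 1 ≤ (n:ℤ) * j :=
            mul_le_mul_of_nonneg_left h1 (by positivity)
          omega
      rw [hj0, mul_zero] at hcontra
      apply hcase
      omega
    simp only [hzero]
    exact tsum_zero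

lemma Theta_mem (τ : ℂ) (n : ℕ) (c : ℂ) (hτ : 0 < τ.im) (hn : 0 < n) (k : ℕ) :
    Theta τ n c k ∈ thetaSpace τ n c :=
  ⟨Theta_diff τ n c hτ hn k, Theta_periodic τ n c k, Theta_quasi τ n c k⟩

/-- `dim Θ_{n,c}(Γ)` = n`. -/
theorem thetaSpace_finrank (τ : ℂ) (hτ : 0 < τ.im) (n : ℕ) (hn : 0 < n) (c : ℂ) :
    Module.finrank ℂ (thetaSpace τ n c) = n := by
  classical
  have hmem : ∀ f : thetaSpace τ n c, Differentiable ℂ (f : ℂ → ℂ) ∧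
      (∀ z, (f : ℂ → ℂ) (z + 1) = (f : ℂ → ℂ) z) ∧
      ∀ z, (f : ℂ → ℂ) (z + τ) = (-1 : ℂ) ^ n *
        Complex.exp (-(2 * Real.pi * I) * ((n : ℂ) * z - c)) * (f : ℂ → ℂ) z :=
    fun f => f.2
  have hintctsF : ∀ (f : ℂ → ℂ), Continuous f → ∀ m : ℤ,
      IntervalIntegrable (fun x : ℝ => Complex.exp (-(2 * Real.pi * I) * m * x) * f x)
        volume 0 1 := by
    intro f hf m
    apply Continuous.intervalIntegrable
    fun_prop
  set Φ : (thetaSpace τ n c) →ₗ[ℂ] (Fin n → ℂ) := {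
    toFun := fun f k => coefI (f : ℂ → ℂ) (k : ℕ)
    map_add' := by
      intro f g
      funext k
      show coefI (↑f + ↑g : ℂ → ℂ) _ = coefI (f : ℂ → ℂ) _ + coefI (g : ℂ → ℂ) _
      unfold coefI
      rw [← intervalIntegral.integral_add (hintctsF _ (hmem f).1.continuous _)
        (hintctsF _ (hmem g).1.continuous _)]
      apply intervalIntegral.integral_congr
      intro x _
      show Complex.exp _ * ((f : ℂ → ℂ) x + (g : ℂ → ℂ) x) = _
      ring
    map_smul' := by
      intro a f
      funext k
      show coefI (a • (f : ℂ → ℂ)) _ = a * coefI (f : ℂ → ℂ) _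
      unfold coefI
      rw [← intervalIntegral.integral_const_mul]
      apply intervalIntegral.integral_congr
      intro x _
      show Complex.exp _ * (a * (f : ℂ → ℂ) x) = _
      ring } with hΦ
  have hinj : Function.Injective Φ := by
    rw [← LinearMap.ker_eq_bot]
    apply LinearMap.ker_eq_bot'.mpr
    intro f hf
    obtain ⟨h1, h2, h3⟩ := hmem f
    have h0 : ∀ k : ℤ, 0 ≤ k → k < n → coefI (f : ℂ → ℂ) k = 0 := by
      intro k hk0 hkn
      have hklt : k.toNat < n := by omega
      have := congrFun hf ⟨k.toNat, hklt⟩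
      simp only [hΦ] at this
      have h4 : ((k.toNat : ℕ) : ℤ) = k := by omega
      rw [show (k : ℤ) = ((k.toNat : ℕ) : ℤ) by omega]
      exact this
    have hall := coef_all_zero τ n hn c _ h1 h2 h3 h0
    have hIco := zero_on_Ico _ h1.continuous h2 hall
    have hzero : (f : ℂ → ℂ) = 0 := entire_zero_of_Ico _ h1 hIco
    exact Subtype.ext hzero
  have hsurj : Function.Surjective Φ := by
    rw [← LinearMap.range_eq_top, ← top_le_iff, ← (Pi.basisFun ℂ (Fin n)).span_eq,
      Submodule.span_le]
    rintro _ ⟨k, rfl⟩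
    refine ⟨⟨Theta τ n c k, Theta_mem τ n c hτ hn k⟩, ?_⟩
    funext m
    show coefI (Theta τ n c k) ((m : ℕ) : ℤ) = _
    rw [coefI_Theta τ n c hτ hn k k.2 _ (by positivity) (by exact_mod_cast m.2)]
    rw [Pi.basisFun_apply, Pi.single_apply]
    have : (((m : ℕ) : ℤ) = ((k : ℕ) : ℤ)) = (m = k) := by
      simp [Fin.ext_iff]
    rw [if_congr (by rw [this]) rfl rfl]
  have e : (thetaSpace τ n c) ≃ₗ[ℂ] (Fin n → ℂ) := LinearEquiv.ofBijective Φ ⟨hinj, hsurj⟩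
  rw [e.finrank_eq]
  exact Module.finrank_fin_fun ℂ
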